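/- Let d ≥ 2, l ≥ 2 and β ∈ (0, 1/d). The determinant of the Hessian of Ψ at the point (ρ,θ) = (β², l(d-1)β²) equals (β²d - 2β + β²l - β²dl + 1) / (l·β⁴·(βd-1)²·(β-1)²·(d-1)). -/

import Mathlib

open Real

/-- The determinant of the Hessian of `Ψ` at `(β², l(d-1)β²)` equals
`(β²d - 2β + β²l - β²dl + 1) / (l β⁴ (βd-1)² (β-1)² (d-1))`. -/

lemma aux_clog (c : ℝ) {v : ℝ → ℝ} {v' x : ℝ} (hv : HasDerivAt v v' x) (h : v x ≠ 0) :
    HasDerivAt (fun y => c * v y * Real.log (v y)) (c * v' * Real.log (v x) + c * v') x := by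
  refine ((hv.const_mul c).mul ((Real.hasDerivAt_log h).comp x hv)).congr_deriv ?_
  field_simp
  rfl

lemma aux_log {v : ℝ → ℝ} {v' x : ℝ} (hv : HasDerivAt v v' x) (h : v x ≠ 0) :
    HasDerivAt (fun y => Real.log (v y)) (v' / v x) x := by
  refine ((Real.hasDerivAt_log h).comp x hv).congr_deriv ?_
  field_simp

lemma rho_hasDerivAt (l d : ℕ) (β T x : ℝ)
    (h1 : x ≠ 0) (h2 : 1-2*β+x ≠ 0) (h3 : β-x ≠ 0) (h4 : β-x-T/(l:ℝ) ≠ 0)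
    (h5 : 1-2*β*(d:ℝ)+x*(d:ℝ)+(T/(l:ℝ))*(d:ℝ) ≠ 0) :
    HasDerivAt (fun ρ => -ρ * Real.log ρ - T * Real.log (T / (l:ℝ))
      + ((l : ℝ) - 1) * (1 - 2 * β + ρ) * Real.log (1 - 2 * β + ρ)
      + T * Real.log ((d : ℝ) - 1)
      + 2 * ((l : ℝ) - 1) * (β - ρ) * Real.log (β - ρ)
      - 2 * (l:ℝ) * (β - ρ - T / (l:ℝ)) * Real.log (β - ρ - T / (l:ℝ))
      - ((l : ℝ) / (d:ℝ)) * (1 - 2 * β * (d:ℝ) + ρ * (d:ℝ) + (T / (l:ℝ)) * (d:ℝ))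
          * Real.log (1 - 2 * β * (d:ℝ) + ρ * (d:ℝ) + (T / (l:ℝ)) * (d:ℝ)))
    (-Real.log x - 1 + ((l:ℝ)-1)*Real.log (1-2*β+x) + ((l:ℝ)-1)
      - 2*((l:ℝ)-1)*Real.log (β-x) - 2*((l:ℝ)-1)
      + 2*(l:ℝ)*Real.log (β-x-T/(l:ℝ)) + 2*(l:ℝ)
      - ((l:ℝ)/(d:ℝ))*(d:ℝ)*Real.log (1-2*β*(d:ℝ)+x*(d:ℝ)+(T/(l:ℝ))*(d:ℝ)) - ((l:ℝ)/(d:ℝ))*(d:ℝ)) x := by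
  have hid : HasDerivAt (fun y : ℝ => y) 1 x := hasDerivAt_id x
  have hv2 : HasDerivAt (fun y : ℝ => 1 - 2*β + y) (0 + 1) x :=
    (hasDerivAt_const x (1 - 2*β)).add hid
  have hv3 : HasDerivAt (fun y : ℝ => β - y) (0 - 1) x := (hasDerivAt_const x β).sub hid
  have hv4 : HasDerivAt (fun y : ℝ => β - y - T/(l:ℝ)) (0 - 1) x := hv3.sub_const _
  have hv5 : HasDerivAt (fun y : ℝ => 1 - 2*β*(d:ℝ) + y*(d:ℝ) + (T/(l:ℝ))*(d:ℝ))
      (0 + 1*(d:ℝ)) x :=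
    (((hasDerivAt_const x (1 - 2*β*(d:ℝ))).add (hid.mul_const (d:ℝ))).add_const _)
  have t1 : HasDerivAt (fun y : ℝ => -y * Real.log y) (-Real.log x - 1) x := by
    refine (hid.neg.mul ((Real.hasDerivAt_log h1).comp x hid)).congr_deriv ?_
    field_simp
    simp only [Function.comp_apply, Pi.neg_apply]; ring
  have t3 := aux_clog ((l:ℝ)-1) hv2 h2
  have t5 := aux_clog (2*((l:ℝ)-1)) hv3 h3
  have t6 := aux_clog (2*(l:ℝ)) hv4 h4
  have t7 := aux_clog ((l:ℝ)/(d:ℝ)) hv5 h5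
  have H := (((((t1.sub_const (T * Real.log (T / (l:ℝ)))).add t3).add_const
      (T * Real.log ((d:ℝ)-1))).add t5).sub t6).sub t7
  exact H.congr_deriv (by ring)

lemma theta_hasDerivAt (l d : ℕ) (β R x : ℝ) (hl : (l:ℝ) ≠ 0) (hd : (d:ℝ) ≠ 0)
    (h1 : x ≠ 0) (h4 : β-R-x/(l:ℝ) ≠ 0)
    (h5 : 1-2*β*(d:ℝ)+R*(d:ℝ)+(x/(l:ℝ))*(d:ℝ) ≠ 0) :
    HasDerivAt (fun θ => -R * Real.log R - θ * Real.log (θ / (l:ℝ))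
      + ((l : ℝ) - 1) * (1 - 2 * β + R) * Real.log (1 - 2 * β + R)
      + θ * Real.log ((d : ℝ) - 1)
      + 2 * ((l : ℝ) - 1) * (β - R) * Real.log (β - R)
      - 2 * (l:ℝ) * (β - R - θ / (l:ℝ)) * Real.log (β - R - θ / (l:ℝ))
      - ((l : ℝ) / (d:ℝ)) * (1 - 2 * β * (d:ℝ) + R * (d:ℝ) + (θ / (l:ℝ)) * (d:ℝ))
          * Real.log (1 - 2 * β * (d:ℝ) + R * (d:ℝ) + (θ / (l:ℝ)) * (d:ℝ)))
    (-Real.log (x/(l:ℝ)) - 1 + Real.log ((d:ℝ)-1)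
      + 2*Real.log (β-R-x/(l:ℝ)) + 2
      - Real.log (1-2*β*(d:ℝ)+R*(d:ℝ)+(x/(l:ℝ))*(d:ℝ)) - 1) x := by
  have hid : HasDerivAt (fun y : ℝ => y) 1 x := hasDerivAt_id x
  have h1' : x/(l:ℝ) ≠ 0 := div_ne_zero h1 hl
  have hv4 : HasDerivAt (fun y : ℝ => β - R - y/(l:ℝ)) (0 - 1/(l:ℝ)) x :=
    (hasDerivAt_const x (β - R)).sub (hid.div_const _)
  have hv5 : HasDerivAt (fun y : ℝ => 1 - 2*β*(d:ℝ) + R*(d:ℝ) + (y/(l:ℝ))*(d:ℝ))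
      (0 + 1/(l:ℝ)*(d:ℝ)) x :=
    (hasDerivAt_const x (1 - 2*β*(d:ℝ) + R*(d:ℝ))).add ((hid.div_const _).mul_const (d:ℝ))
  have t2 : HasDerivAt (fun y : ℝ => y * Real.log (y/(l:ℝ))) (Real.log (x/(l:ℝ)) + 1) x := by
    refine (hid.mul ((Real.hasDerivAt_log h1').comp x (hid.div_const (l:ℝ)))).congr_deriv ?_
    field_simp
    rfl
  have t4 : HasDerivAt (fun y : ℝ => y * Real.log ((d:ℝ)-1)) (1 * Real.log ((d:ℝ)-1)) x :=
    hid.mul_const _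
  have t6 := aux_clog (2*(l:ℝ)) hv4 h4
  have t7 := aux_clog ((l:ℝ)/(d:ℝ)) hv5 h5
  have H := ((((((hasDerivAt_const x (-R * Real.log R)).sub t2).add_const
      (((l:ℝ)-1) * (1-2*β+R) * Real.log (1-2*β+R))).add t4).add_const
      (2*((l:ℝ)-1)*(β-R)*Real.log (β-R))).sub t6).sub t7
  refine H.congr_deriv ?_
  field_simp
  ring

set_option maxHeartbeats 1600000 in
theorem Psi_hessian_det (d l : ℕ) (hd : 2 ≤ d) (hl : 2 ≤ l)
    (β : ℝ) (hβ : β ∈ Set.Ioo (0 : ℝ) (1 / d))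
    (Ψ : ℝ → ℝ → ℝ)
    (hΨ : Ψ = fun ρ θ => -ρ * Real.log ρ - θ * Real.log (θ / l)
      + ((l : ℝ) - 1) * (1 - 2 * β + ρ) * Real.log (1 - 2 * β + ρ)
      + θ * Real.log ((d : ℝ) - 1)
      + 2 * ((l : ℝ) - 1) * (β - ρ) * Real.log (β - ρ)
      - 2 * l * (β - ρ - θ / l) * Real.log (β - ρ - θ / l)
      - ((l : ℝ) / d) * (1 - 2 * β * d + ρ * d + (θ / l) * d)
          * Real.log (1 - 2 * β * d + ρ * d + (θ / l) * d)) :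
    (deriv (deriv (fun ρ => Ψ ρ ((l : ℝ) * ((d : ℝ) - 1) * β ^ 2))) (β ^ 2))
        * (deriv (deriv (fun θ => Ψ (β ^ 2) θ)) ((l : ℝ) * ((d : ℝ) - 1) * β ^ 2))
      - (deriv (fun θ => deriv (fun ρ => Ψ ρ θ) (β ^ 2)) ((l : ℝ) * ((d : ℝ) - 1) * β ^ 2)) ^ 2
      = (β ^ 2 * d - 2 * β + β ^ 2 * l - β ^ 2 * d * l + 1) /
          ((l : ℝ) * β ^ 4 * (β * d - 1) ^ 2 * (β - 1) ^ 2 * ((d : ℝ) - 1)) := by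
  obtain ⟨hb0, hbds⟩ := hβ
  have hdpos : 0 < d := by omega
  have hd0 : (0:ℝ) < d := by exact_mod_cast hdpos
  have hlpos : 0 < l := by omega
  have hl0 : (0:ℝ) < l := by exact_mod_cast hlpos
  have hd2 : (2:ℝ) ≤ d := by exact_mod_cast hd
  have hbd : β * d < 1 := (lt_div_iff₀ hd0).mp hbds
  have hb1 : β < 1 := by nlinarith
  have hD1 : (0:ℝ) < (d:ℝ) - 1 := by nlinarith
  have h1bd : (0:ℝ) < 1 - β * d := by nlinarith
  have p1 : (0:ℝ) < (β ^ 2) := by positivity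
  have p2 : (0:ℝ) < 1-2*β+(β ^ 2) := by nlinarith
  have p3 : (0:ℝ) < β-(β ^ 2) := by nlinarith
  have hT : ((l:ℝ) * ((d:ℝ) - 1) * β ^ 2) / (l:ℝ) = ((d:ℝ)-1)*β^2 := by field_simp
  have p4 : (0:ℝ) < β-(β ^ 2)-((l:ℝ) * ((d:ℝ) - 1) * β ^ 2)/(l:ℝ) := by rw [hT]; nlinarith
  have p5 : (0:ℝ) < 1-2*β*(d:ℝ)+(β ^ 2)*(d:ℝ)+(((l:ℝ) * ((d:ℝ) - 1) * β ^ 2)/(l:ℝ))*(d:ℝ) := by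
    rw [hT]; nlinarith [mul_pos h1bd h1bd]
  have pt : (0:ℝ) < ((l:ℝ) * ((d:ℝ) - 1) * β ^ 2) := mul_pos (mul_pos hl0 hD1) p1
  have ptl : (0:ℝ) < ((l:ℝ) * ((d:ℝ) - 1) * β ^ 2)/(l:ℝ) := div_pos pt hl0
  subst hΨ
  beta_reduce
  have hid2 : HasDerivAt (fun y : ℝ => y) 1 ((β ^ 2)) := hasDerivAt_id _
  have hv2' : HasDerivAt (fun y : ℝ => 1-2*β+y) (0+1) ((β ^ 2)) :=
    (hasDerivAt_const _ _).add hid2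
  have hv3' : HasDerivAt (fun y : ℝ => β-y) (0-1) ((β ^ 2)) := (hasDerivAt_const _ β).sub hid2
  have hv4' : HasDerivAt (fun y : ℝ => β-y-((l:ℝ) * ((d:ℝ) - 1) * β ^ 2)/(l:ℝ)) (0-1) ((β ^ 2)) := hv3'.sub_const _
  have hv5' : HasDerivAt (fun y : ℝ => 1-2*β*(d:ℝ)+y*(d:ℝ)+(((l:ℝ) * ((d:ℝ) - 1) * β ^ 2)/(l:ℝ))*(d:ℝ))
      (0+1*(d:ℝ)) ((β ^ 2)) :=
    ((hasDerivAt_const _ _).add (hid2.mul_const _)).add_const _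
  have hidt : HasDerivAt (fun y : ℝ => y) 1 ((l:ℝ) * ((d:ℝ) - 1) * β ^ 2) := hasDerivAt_id _
  have hv4t : HasDerivAt (fun y : ℝ => β-(β ^ 2)-y/(l:ℝ)) (0-1/(l:ℝ)) ((l:ℝ) * ((d:ℝ) - 1) * β ^ 2) :=
    (hasDerivAt_const _ _).sub (hidt.div_const _)
  have hv5t : HasDerivAt (fun y : ℝ => 1-2*β*(d:ℝ)+(β ^ 2)*(d:ℝ)+(y/(l:ℝ))*(d:ℝ))
      (0+1/(l:ℝ)*(d:ℝ)) ((l:ℝ) * ((d:ℝ) - 1) * β ^ 2) :=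
    (hasDerivAt_const _ _).add ((hidt.div_const _).mul_const _)
  have hSr : IsOpen ({x : ℝ | 0 < x} ∩ ({x : ℝ | 0 < 1-2*β+x} ∩ ({x : ℝ | 0 < β-x} ∩ ({x : ℝ | 0 < β-x-((l:ℝ) * ((d:ℝ) - 1) * β ^ 2)/(l:ℝ)}
      ∩ {x : ℝ | 0 < 1-2*β*(d:ℝ)+x*(d:ℝ)+(((l:ℝ) * ((d:ℝ) - 1) * β ^ 2)/(l:ℝ))*(d:ℝ)})))) :=
    (isOpen_lt continuous_const continuous_id).inter
      ((isOpen_lt continuous_const (by fun_prop)).inter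
        ((isOpen_lt continuous_const (by fun_prop)).inter
          ((isOpen_lt continuous_const (by fun_prop)).inter
            (isOpen_lt continuous_const (by fun_prop)))))
  have hmemr : ((β ^ 2)) ∈ ({x : ℝ | 0 < x} ∩ ({x : ℝ | 0 < 1-2*β+x} ∩ ({x : ℝ | 0 < β-x} ∩ ({x : ℝ | 0 < β-x-((l:ℝ) * ((d:ℝ) - 1) * β ^ 2)/(l:ℝ)}
      ∩ {x : ℝ | 0 < 1-2*β*(d:ℝ)+x*(d:ℝ)+(((l:ℝ) * ((d:ℝ) - 1) * β ^ 2)/(l:ℝ))*(d:ℝ)})))) := ⟨p1, p2, p3, p4, p5⟩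
  have hSt : IsOpen ({x : ℝ | 0 < x} ∩ ({x : ℝ | 0 < β-(β ^ 2)-x/(l:ℝ)}
      ∩ {x : ℝ | 0 < 1-2*β*(d:ℝ)+(β ^ 2)*(d:ℝ)+(x/(l:ℝ))*(d:ℝ)})) :=
    (isOpen_lt continuous_const continuous_id).inter
      ((isOpen_lt continuous_const (by fun_prop)).inter
        (isOpen_lt continuous_const (by fun_prop)))
  have hmemt : ((l:ℝ) * ((d:ℝ) - 1) * β ^ 2) ∈ ({x : ℝ | 0 < x} ∩ ({x : ℝ | 0 < β-(β ^ 2)-x/(l:ℝ)}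
      ∩ {x : ℝ | 0 < 1-2*β*(d:ℝ)+(β ^ 2)*(d:ℝ)+(x/(l:ℝ))*(d:ℝ)})) := ⟨pt, p4, p5⟩
  have E1 : deriv (deriv (fun ρ : ℝ => -ρ * Real.log ρ - ((l:ℝ) * ((d:ℝ) - 1) * β ^ 2) * Real.log (((l:ℝ) * ((d:ℝ) - 1) * β ^ 2) / (l:ℝ))
      + ((l : ℝ) - 1) * (1 - 2 * β + ρ) * Real.log (1 - 2 * β + ρ)
      + ((l:ℝ) * ((d:ℝ) - 1) * β ^ 2) * Real.log ((d : ℝ) - 1)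
      + 2 * ((l : ℝ) - 1) * (β - ρ) * Real.log (β - ρ)
      - 2 * (l:ℝ) * (β - ρ - ((l:ℝ) * ((d:ℝ) - 1) * β ^ 2) / (l:ℝ)) * Real.log (β - ρ - ((l:ℝ) * ((d:ℝ) - 1) * β ^ 2) / (l:ℝ))
      - ((l : ℝ) / (d:ℝ)) * (1 - 2 * β * (d:ℝ) + ρ * (d:ℝ) + (((l:ℝ) * ((d:ℝ) - 1) * β ^ 2) / (l:ℝ)) * (d:ℝ))
          * Real.log (1 - 2 * β * (d:ℝ) + ρ * (d:ℝ) + (((l:ℝ) * ((d:ℝ) - 1) * β ^ 2) / (l:ℝ)) * (d:ℝ)))) ((β ^ 2))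
      = -(1/(β ^ 2)) + ((l:ℝ)-1)/(1-2*β+(β ^ 2)) + 2*((l:ℝ)-1)/(β-(β ^ 2))
        - 2*(l:ℝ)/(β-(β ^ 2)-((l:ℝ) * ((d:ℝ) - 1) * β ^ 2)/(l:ℝ))
        - (l:ℝ)*(d:ℝ)/(1-2*β*(d:ℝ)+(β ^ 2)*(d:ℝ)+(((l:ℝ) * ((d:ℝ) - 1) * β ^ 2)/(l:ℝ))*(d:ℝ)) := by
    have hev : deriv (fun ρ : ℝ => -ρ * Real.log ρ - ((l:ℝ) * ((d:ℝ) - 1) * β ^ 2) * Real.log (((l:ℝ) * ((d:ℝ) - 1) * β ^ 2) / (l:ℝ))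
      + ((l : ℝ) - 1) * (1 - 2 * β + ρ) * Real.log (1 - 2 * β + ρ)
      + ((l:ℝ) * ((d:ℝ) - 1) * β ^ 2) * Real.log ((d : ℝ) - 1)
      + 2 * ((l : ℝ) - 1) * (β - ρ) * Real.log (β - ρ)
      - 2 * (l:ℝ) * (β - ρ - ((l:ℝ) * ((d:ℝ) - 1) * β ^ 2) / (l:ℝ)) * Real.log (β - ρ - ((l:ℝ) * ((d:ℝ) - 1) * β ^ 2) / (l:ℝ))
      - ((l : ℝ) / (d:ℝ)) * (1 - 2 * β * (d:ℝ) + ρ * (d:ℝ) + (((l:ℝ) * ((d:ℝ) - 1) * β ^ 2) / (l:ℝ)) * (d:ℝ))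
          * Real.log (1 - 2 * β * (d:ℝ) + ρ * (d:ℝ) + (((l:ℝ) * ((d:ℝ) - 1) * β ^ 2) / (l:ℝ)) * (d:ℝ)))
        =ᶠ[nhds ((β ^ 2))] (fun y : ℝ => -Real.log y - 1 + ((l:ℝ)-1)*Real.log (1-2*β+y) + ((l:ℝ)-1)
      - 2*((l:ℝ)-1)*Real.log (β-y) - 2*((l:ℝ)-1)
      + 2*(l:ℝ)*Real.log (β-y-((l:ℝ) * ((d:ℝ) - 1) * β ^ 2)/(l:ℝ)) + 2*(l:ℝ)
      - ((l:ℝ)/(d:ℝ))*(d:ℝ)*Real.log (1-2*β*(d:ℝ)+y*(d:ℝ)+(((l:ℝ) * ((d:ℝ) - 1) * β ^ 2)/(l:ℝ))*(d:ℝ)) - ((l:ℝ)/(d:ℝ))*(d:ℝ)) :=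
      (hSr.eventually_mem hmemr).mono (fun x hx =>
        (rho_hasDerivAt l d β ((l:ℝ) * ((d:ℝ) - 1) * β ^ 2) x hx.1.ne' hx.2.1.ne' hx.2.2.1.ne'
          hx.2.2.2.1.ne' hx.2.2.2.2.ne').deriv)
    rw [hev.deriv_eq]
    refine HasDerivAt.deriv ?_
    refine (((((((((aux_log hid2 p1.ne').neg).sub_const 1).add
      ((aux_log hv2' p2.ne').const_mul ((l:ℝ)-1))).add_const ((l:ℝ)-1)).sub
      ((aux_log hv3' p3.ne').const_mul (2*((l:ℝ)-1)))).sub_const (2*((l:ℝ)-1))).add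
      ((aux_log hv4' p4.ne').const_mul (2*(l:ℝ)))).add_const (2*(l:ℝ))).sub
      ((aux_log hv5' p5.ne').const_mul ((l:ℝ)/(d:ℝ)*(d:ℝ))) |>.sub_const ((l:ℝ)/(d:ℝ)*(d:ℝ))
      |>.congr_deriv ?_
    beta_reduce
    field_simp [p1.ne', p2.ne', p3.ne', p4.ne', p5.ne', hl0.ne', hd0.ne', pt.ne', ptl.ne']
    ring
  have E2 : deriv (deriv (fun θ : ℝ => -(β ^ 2) * Real.log (β ^ 2) - θ * Real.log (θ / (l:ℝ))
      + ((l : ℝ) - 1) * (1 - 2 * β + (β ^ 2)) * Real.log (1 - 2 * β + (β ^ 2))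
      + θ * Real.log ((d : ℝ) - 1)
      + 2 * ((l : ℝ) - 1) * (β - (β ^ 2)) * Real.log (β - (β ^ 2))
      - 2 * (l:ℝ) * (β - (β ^ 2) - θ / (l:ℝ)) * Real.log (β - (β ^ 2) - θ / (l:ℝ))
      - ((l : ℝ) / (d:ℝ)) * (1 - 2 * β * (d:ℝ) + (β ^ 2) * (d:ℝ) + (θ / (l:ℝ)) * (d:ℝ))
          * Real.log (1 - 2 * β * (d:ℝ) + (β ^ 2) * (d:ℝ) + (θ / (l:ℝ)) * (d:ℝ)))) ((l:ℝ) * ((d:ℝ) - 1) * β ^ 2)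
      = -(1/((l:ℝ) * ((d:ℝ) - 1) * β ^ 2)) - 2/(l:ℝ)/(β-(β ^ 2)-((l:ℝ) * ((d:ℝ) - 1) * β ^ 2)/(l:ℝ))
        - (d:ℝ)/(l:ℝ)/(1-2*β*(d:ℝ)+(β ^ 2)*(d:ℝ)+(((l:ℝ) * ((d:ℝ) - 1) * β ^ 2)/(l:ℝ))*(d:ℝ)) := by
    have hev : deriv (fun θ : ℝ => -(β ^ 2) * Real.log (β ^ 2) - θ * Real.log (θ / (l:ℝ))
      + ((l : ℝ) - 1) * (1 - 2 * β + (β ^ 2)) * Real.log (1 - 2 * β + (β ^ 2))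
      + θ * Real.log ((d : ℝ) - 1)
      + 2 * ((l : ℝ) - 1) * (β - (β ^ 2)) * Real.log (β - (β ^ 2))
      - 2 * (l:ℝ) * (β - (β ^ 2) - θ / (l:ℝ)) * Real.log (β - (β ^ 2) - θ / (l:ℝ))
      - ((l : ℝ) / (d:ℝ)) * (1 - 2 * β * (d:ℝ) + (β ^ 2) * (d:ℝ) + (θ / (l:ℝ)) * (d:ℝ))
          * Real.log (1 - 2 * β * (d:ℝ) + (β ^ 2) * (d:ℝ) + (θ / (l:ℝ)) * (d:ℝ)))
        =ᶠ[nhds ((l:ℝ) * ((d:ℝ) - 1) * β ^ 2)] (fun y : ℝ => -Real.log (y/(l:ℝ)) - 1 + Real.log ((d:ℝ)-1)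
      + 2*Real.log (β-(β ^ 2)-y/(l:ℝ)) + 2
      - Real.log (1-2*β*(d:ℝ)+(β ^ 2)*(d:ℝ)+(y/(l:ℝ))*(d:ℝ)) - 1) :=
      (hSt.eventually_mem hmemt).mono (fun x hx =>
        (theta_hasDerivAt l d β ((β ^ 2)) x hl0.ne' hd0.ne' hx.1.ne' hx.2.1.ne'
          hx.2.2.ne').deriv)
    rw [hev.deriv_eq]
    refine HasDerivAt.deriv ?_
    refine ((((((aux_log (hidt.div_const (l:ℝ)) ptl.ne').neg).sub_const 1).add_const
      (Real.log ((d:ℝ)-1))).add ((aux_log hv4t p4.ne').const_mul 2)).add_const 2).sub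
      (aux_log hv5t p5.ne') |>.sub_const 1 |>.congr_deriv ?_
    beta_reduce
    field_simp [p1.ne', p2.ne', p3.ne', p4.ne', p5.ne', hl0.ne', hd0.ne', pt.ne', ptl.ne']
    ring
  have E3 : deriv (fun θ : ℝ => deriv (fun ρ : ℝ => -ρ * Real.log ρ - θ * Real.log (θ / (l:ℝ))
      + ((l : ℝ) - 1) * (1 - 2 * β + ρ) * Real.log (1 - 2 * β + ρ)
      + θ * Real.log ((d : ℝ) - 1)
      + 2 * ((l : ℝ) - 1) * (β - ρ) * Real.log (β - ρ)
      - 2 * (l:ℝ) * (β - ρ - θ / (l:ℝ)) * Real.log (β - ρ - θ / (l:ℝ))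
      - ((l : ℝ) / (d:ℝ)) * (1 - 2 * β * (d:ℝ) + ρ * (d:ℝ) + (θ / (l:ℝ)) * (d:ℝ))
          * Real.log (1 - 2 * β * (d:ℝ) + ρ * (d:ℝ) + (θ / (l:ℝ)) * (d:ℝ))) ((β ^ 2))) ((l:ℝ) * ((d:ℝ) - 1) * β ^ 2)
      = -2/(β-(β ^ 2)-((l:ℝ) * ((d:ℝ) - 1) * β ^ 2)/(l:ℝ))
        - (d:ℝ)/(1-2*β*(d:ℝ)+(β ^ 2)*(d:ℝ)+(((l:ℝ) * ((d:ℝ) - 1) * β ^ 2)/(l:ℝ))*(d:ℝ)) := by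
    have hev : (fun θ : ℝ => deriv (fun ρ : ℝ => -ρ * Real.log ρ - θ * Real.log (θ / (l:ℝ))
      + ((l : ℝ) - 1) * (1 - 2 * β + ρ) * Real.log (1 - 2 * β + ρ)
      + θ * Real.log ((d : ℝ) - 1)
      + 2 * ((l : ℝ) - 1) * (β - ρ) * Real.log (β - ρ)
      - 2 * (l:ℝ) * (β - ρ - θ / (l:ℝ)) * Real.log (β - ρ - θ / (l:ℝ))
      - ((l : ℝ) / (d:ℝ)) * (1 - 2 * β * (d:ℝ) + ρ * (d:ℝ) + (θ / (l:ℝ)) * (d:ℝ))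
          * Real.log (1 - 2 * β * (d:ℝ) + ρ * (d:ℝ) + (θ / (l:ℝ)) * (d:ℝ))) ((β ^ 2)))
        =ᶠ[nhds ((l:ℝ) * ((d:ℝ) - 1) * β ^ 2)] (fun y : ℝ => -Real.log (β ^ 2) - 1 + ((l:ℝ)-1)*Real.log (1-2*β+(β ^ 2)) + ((l:ℝ)-1)
      - 2*((l:ℝ)-1)*Real.log (β-(β ^ 2)) - 2*((l:ℝ)-1)
      + 2*(l:ℝ)*Real.log (β-(β ^ 2)-y/(l:ℝ)) + 2*(l:ℝ)
      - ((l:ℝ)/(d:ℝ))*(d:ℝ)*Real.log (1-2*β*(d:ℝ)+(β ^ 2)*(d:ℝ)+(y/(l:ℝ))*(d:ℝ)) - ((l:ℝ)/(d:ℝ))*(d:ℝ)) :=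
      (hSt.eventually_mem hmemt).mono (fun x hx =>
        (rho_hasDerivAt l d β x ((β ^ 2)) p1.ne' p2.ne' p3.ne' hx.2.1.ne'
          hx.2.2.ne').deriv)
    rw [hev.deriv_eq]
    refine HasDerivAt.deriv ?_
    refine (((hasDerivAt_const ((l:ℝ) * ((d:ℝ) - 1) * β ^ 2) (-Real.log ((β ^ 2)) - 1 + ((l:ℝ)-1)*Real.log (1-2*β+(β ^ 2))
      + ((l:ℝ)-1) - 2*((l:ℝ)-1)*Real.log (β-(β ^ 2)) - 2*((l:ℝ)-1))).add
      ((aux_log hv4t p4.ne').const_mul (2*(l:ℝ)))).add_const (2*(l:ℝ))).sub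
      ((aux_log hv5t p5.ne').const_mul ((l:ℝ)/(d:ℝ)*(d:ℝ))) |>.sub_const ((l:ℝ)/(d:ℝ)*(d:ℝ))
      |>.congr_deriv ?_
    beta_reduce
    field_simp [p1.ne', p2.ne', p3.ne', p4.ne', p5.ne', hl0.ne', hd0.ne', pt.ne', ptl.ne']
    ring
  rw [E1, E2, E3, hT]
  rw [hT] at p4 p5
  have hbm1 : β - 1 ≠ 0 := sub_ne_zero.mpr hb1.ne
  have hbdm1 : β * (d:ℝ) - 1 ≠ 0 := by nlinarith
  have e2 : 1-2*β+β^2 = (1-β)^2 := by ring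
  have e4 : β-β^2-((d:ℝ)-1)*β^2 = β*(1-β*d) := by ring
  have e5 : 1-2*β*(d:ℝ)+β^2*(d:ℝ)+(((d:ℝ)-1)*β^2)*(d:ℝ) = (1-β*d)^2 := by ring
  have h1b : 1-β ≠ 0 := by linarith
  rw [e2, e4, e5]
  field_simp [p1.ne', p2.ne', p3.ne', p4.ne', p5.ne', hl0.ne', hd0.ne', pt.ne',
    hb0.ne', hD1.ne', hbm1, hbdm1, h1b, h1bd.ne']
  ring
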